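/- Fix m > 0 and let ρ be the measure on (0,∞) with density α m² x^{−2α−1} e^{−m x^{−α}} with respect to Lebesgue measure. Then ρ is a probability measure, its cumulative distribution function is F_ρ(x) = ( 1 + m x^{−α} ) e^{−m x^{−α}} for x > 0, its Williamson transform is G_ρ(t) = e^{−m t^{−α}} for t > 0, and its truncated α-moment is H_ρ(t) = m e^{−m t^{−α}} for t > 0. -/

import Mathlib

open MeasureTheory Filter Real Topology NNReal ENNReal

private lemma ftc_Ioc_aux {g g' : ℝ → ℝ} {b : ℝ} (hb : 0 < b)
    (hderiv : ∀ x ∈ Set.Ioi (0:ℝ), HasDerivAt g (g' x) x)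
    (hcont : ContinuousOn g' (Set.Ioi 0))
    (hpos : ∀ x ∈ Set.Ioi (0:ℝ), 0 ≤ g' x)
    (hg0 : ∀ x ∈ Set.Ioi (0:ℝ), 0 ≤ g x)
    (hlim : Tendsto g (𝓝[>] (0:ℝ)) (𝓝 0)) :
    IntegrableOn g' (Set.Ioc 0 b) ∧ ∫ x in Set.Ioc 0 b, g' x = g b := by
  set a : ℕ → ℝ := fun n => b / (n + 1) with ha_def
  have ha_pos : ∀ n, 0 < a n := fun n => div_pos hb (by positivity)
  have ha_le : ∀ n, a n ≤ b := fun n => by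
    rw [ha_def]
    apply div_le_self hb.le
    have : (0:ℝ) ≤ (n:ℝ) := Nat.cast_nonneg n
    linarith
  have ha_tendsto : Tendsto a atTop (𝓝 0) := by
    have h := tendsto_one_div_add_atTop_nhds_zero_nat.const_mul b
    simp only [mul_zero] at h
    refine h.congr fun n => ?_
    rw [ha_def]; field_simp
  have ha_tendsto' : Tendsto a atTop (𝓝[>] (0:ℝ)) :=
    tendsto_nhdsWithin_of_tendsto_nhds_of_eventually_within _ ha_tendsto
      (Eventually.of_forall fun n => ha_pos n)
  have key : ∀ c, 0 < c → c ≤ b →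
      IntegrableOn g' (Set.Ioc c b) ∧ ∫ x in Set.Ioc c b, g' x = g b - g c := by
    intro c hc hcb
    have hsub : Set.Icc c b ⊆ Set.Ioi 0 := fun x hx => lt_of_lt_of_le hc hx.1
    have hcont' : ContinuousOn g' (Set.uIcc c b) := by
      rw [Set.uIcc_of_le hcb]; exact hcont.mono hsub
    have hii : IntervalIntegrable g' volume c b := hcont'.intervalIntegrable
    have hint : IntegrableOn g' (Set.Ioc c b) := by
      rw [intervalIntegrable_iff_integrableOn_Ioc_of_le hcb] at hii; exact hii
    refine ⟨hint, ?_⟩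
    have h := intervalIntegral.integral_eq_sub_of_hasDerivAt
      (fun x hx => hderiv x (hsub (by rwa [Set.uIcc_of_le hcb] at hx))) hii
    rwa [intervalIntegral.integral_of_le hcb] at h
  have hnn : ∀ n, ∫ x in Set.Ioc (a n) b, ‖g' x‖ ≤ g b := by
    intro n
    have heq : ∫ x in Set.Ioc (a n) b, ‖g' x‖ = ∫ x in Set.Ioc (a n) b, g' x :=
      setIntegral_congr_fun measurableSet_Ioc fun x hx =>
        Real.norm_of_nonneg (hpos x ((ha_pos n).trans hx.1))
    rw [heq, (key (a n) (ha_pos n) (ha_le n)).2]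
    have := hg0 (a n) (ha_pos n)
    linarith
  have hIoc : IntegrableOn g' (Set.Ioc 0 b) := by
    apply integrableOn_Ioc_of_intervalIntegral_norm_bounded_left
      (fun n => (key (a n) (ha_pos n) (ha_le n)).1) ha_tendsto
    exact Eventually.of_forall hnn
  have hmono : Monotone fun n => Set.Ioc (a n) b := by
    intro i j hij
    apply Set.Ioc_subset_Ioc_left
    rw [ha_def]
    apply div_le_div_of_nonneg_left hb.le (by positivity)
    have : (i:ℝ) ≤ (j:ℝ) := Nat.cast_le.2 hij
    linarith
  have hunion : (⋃ n, Set.Ioc (a n) b) = Set.Ioc 0 b := by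
    ext x
    simp only [Set.mem_iUnion, Set.mem_Ioc]
    constructor
    · rintro ⟨n, h1, h2⟩; exact ⟨(ha_pos n).trans h1, h2⟩
    · rintro ⟨hx0, hxb⟩
      obtain ⟨n, hn⟩ := (ha_tendsto.eventually_lt_const hx0).exists
      exact ⟨n, hn, hxb⟩
  have hIoc' : IntegrableOn g' (⋃ n, Set.Ioc (a n) b) := by rw [hunion]; exact hIoc
  have h1 := tendsto_setIntegral_of_monotone (fun n => measurableSet_Ioc) hmono hIoc'
  rw [hunion] at h1
  have h2 : Tendsto (fun n => ∫ x in Set.Ioc (a n) b, g' x) atTop (𝓝 (g b)) := by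
    have h3 : Tendsto (fun n => g b - g (a n)) atTop (𝓝 (g b - 0)) :=
      tendsto_const_nhds.sub (hlim.comp ha_tendsto')
    rw [sub_zero] at h3
    exact h3.congr fun n => ((key (a n) (ha_pos n) (ha_le n)).2).symm
  exact ⟨hIoc, tendsto_nhds_unique h1 h2⟩

/-- the Kendall-stable law ρ with density α m² x^{−2α−1} e^{−m x^{−α}} on
(0,∞) is a probability measure with cdf (1 + m x^{−α}) e^{−m x^{−α}}, Williamson transform
e^{−m t^{−α}} and truncated α-moment m e^{−m t^{−α}}. -/
theorem kendall_stable_law_properties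
    (α m : ℝ) (hα : 0 < α) (hm : 0 < m)
    (ρ : Measure ℝ)
    (hρ : ρ = (volume.restrict (Set.Ioi 0)).withDensity
      fun x => ENNReal.ofReal (α * m ^ 2 * x ^ (-2 * α - 1) * Real.exp (-m * x ^ (-α)))) :
    IsProbabilityMeasure ρ ∧
    (∀ x, 0 < x → (ρ (Set.Iic x)).toReal = (1 + m * x ^ (-α)) * Real.exp (-m * x ^ (-α))) ∧
    (∀ t, 0 < t → ∫ x, max (1 - (x / t) ^ α) 0 ∂ρ = Real.exp (-m * t ^ (-α))) ∧
    (∀ t, 0 < t → ∫ x in Set.Icc 0 t, x ^ α ∂ρ = m * Real.exp (-m * t ^ (-α))) := by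
  set D : ℝ → ℝ := fun x => α * m ^ 2 * x ^ (-2 * α - 1) * Real.exp (-m * x ^ (-α)) with hD
  set F : ℝ → ℝ := fun x => (1 + m * x ^ (-α)) * Real.exp (-m * x ^ (-α)) with hF
  set Φ : ℝ → ℝ := fun x => m * Real.exp (-m * x ^ (-α)) with hΦ
  -- measurability and sign
  have hDpos : ∀ x ∈ Set.Ioi (0:ℝ), 0 ≤ D x := by
    intro x hx
    have hx' : (0:ℝ) < x := hx
    have h1 : (0:ℝ) ≤ x ^ (-2 * α - 1) := Real.rpow_nonneg hx'.le _
    have h2 : (0:ℝ) ≤ Real.exp (-m * x ^ (-α)) := (Real.exp_pos _).le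
    have h3 : (0:ℝ) ≤ α * m ^ 2 := by positivity
    exact mul_nonneg (mul_nonneg h3 h1) h2
  have hDcont : ContinuousOn D (Set.Ioi 0) := by
    have hr : ∀ p : ℝ, ContinuousOn (fun x : ℝ => x ^ p) (Set.Ioi 0) := fun p =>
      ContinuousOn.rpow_const continuousOn_id fun x hx => Or.inl (ne_of_gt hx)
    exact ((continuousOn_const.mul (hr _)).mul
      ((Real.continuous_exp.comp_continuousOn (continuousOn_const.mul (hr _)))))
  -- derivative facts
  have hFderiv : ∀ x ∈ Set.Ioi (0:ℝ), HasDerivAt F (D x) x := by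
    intro x hx
    have hx' : (0:ℝ) < x := hx
    have h1 : HasDerivAt (fun y : ℝ => y ^ (-α)) (-α * x ^ (-α - 1)) x :=
      Real.hasDerivAt_rpow_const (Or.inl (ne_of_gt hx'))
    have h2 : HasDerivAt (fun y : ℝ => m * y ^ (-α)) (m * (-α * x ^ (-α - 1))) x :=
      h1.const_mul m
    have h3 : HasDerivAt (fun y : ℝ => -m * y ^ (-α)) (-m * (-α * x ^ (-α - 1))) x :=
      h1.const_mul (-m)
    have h4 : HasDerivAt (fun y : ℝ => Real.exp (-m * y ^ (-α)))
        (Real.exp (-m * x ^ (-α)) * (-m * (-α * x ^ (-α - 1)))) x := h3.exp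
    have h5 : HasDerivAt (fun y : ℝ => 1 + m * y ^ (-α)) (m * (-α * x ^ (-α - 1))) x :=
      h2.const_add 1
    have h6 := h5.mul h4
    have hadd : x ^ (-2 * α - 1) = x ^ (-α) * x ^ (-α - 1) := by
      rw [← Real.rpow_add hx']; congr 1; ring
    convert h6 using 1
    · rfl
    · rfl
    · rfl
    rw [hD]
    simp only
    rw [hadd]
    ring
  have hΦderiv : ∀ x ∈ Set.Ioi (0:ℝ), HasDerivAt Φ (x ^ α * D x) x := by
    intro x hx
    have hx' : (0:ℝ) < x := hx
    have h1 : HasDerivAt (fun y : ℝ => y ^ (-α)) (-α * x ^ (-α - 1)) x :=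
      Real.hasDerivAt_rpow_const (Or.inl (ne_of_gt hx'))
    have h2 : HasDerivAt (fun y : ℝ => m * y ^ (-α)) (m * (-α * x ^ (-α - 1))) x :=
      h1.const_mul m
    have h3 : HasDerivAt (fun y : ℝ => -m * y ^ (-α)) (-m * (-α * x ^ (-α - 1))) x :=
      h1.const_mul (-m)
    have h4 : HasDerivAt (fun y : ℝ => Real.exp (-m * y ^ (-α)))
        (Real.exp (-m * x ^ (-α)) * (-m * (-α * x ^ (-α - 1)))) x := h3.exp
    have h5 := h4.const_mul m
    have hadd : x ^ α * x ^ (-2 * α - 1) = x ^ (-α - 1) := by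
      rw [← Real.rpow_add hx']; congr 1; ring
    convert h5 using 1
    · rfl
    · rfl
    rw [hD]
    simp only
    rw [show x ^ α * (α * m ^ 2 * x ^ (-2 * α - 1) * Real.exp (-m * x ^ (-α)))
        = α * m ^ 2 * (x ^ α * x ^ (-2 * α - 1)) * Real.exp (-m * x ^ (-α)) by ring, hadd]
    ring
  -- limits at 0+
  have hu0 : Tendsto (fun x : ℝ => m * x ^ (-α)) (𝓝[>] (0:ℝ)) atTop := by
    have h1 : Tendsto (fun x : ℝ => (x⁻¹) ^ α) (𝓝[>] (0:ℝ)) atTop :=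
      (_root_.tendsto_rpow_atTop hα).comp tendsto_inv_nhdsGT_zero
    have h2 : Tendsto (fun x : ℝ => x ^ (-α)) (𝓝[>] (0:ℝ)) atTop := by
      refine h1.congr' ?_
      filter_upwards [self_mem_nhdsWithin] with x hx
      rw [Real.inv_rpow (le_of_lt hx), ← Real.rpow_neg (le_of_lt hx)]
    exact h2.const_mul_atTop hm
  have hFlim : Tendsto F (𝓝[>] (0:ℝ)) (𝓝 0) := by
    have hφ : Tendsto (fun u : ℝ => (1 + u) * Real.exp (-u)) atTop (𝓝 0) := by
      have h1 : Tendsto (fun u : ℝ => Real.exp (-u)) atTop (𝓝 0) :=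
        Real.tendsto_exp_neg_atTop_nhds_zero
      have h2 : Tendsto (fun u : ℝ => u * Real.exp (-u)) atTop (𝓝 0) := by
        have := Real.tendsto_pow_mul_exp_neg_atTop_nhds_zero 1
        simpa using this
      have h3 := h1.add h2
      rw [add_zero] at h3
      exact h3.congr fun u => by ring
    have h := hφ.comp hu0
    refine h.congr fun x => ?_
    simp only [Function.comp, hF, neg_mul]
  have hΦlim : Tendsto Φ (𝓝[>] (0:ℝ)) (𝓝 0) := by
    have h1 : Tendsto (fun u : ℝ => m * Real.exp (-u)) atTop (𝓝 (m * 0)) :=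
      Real.tendsto_exp_neg_atTop_nhds_zero.const_mul m
    rw [mul_zero] at h1
    have h := h1.comp hu0
    refine h.congr fun x => ?_
    simp only [Function.comp, hΦ, neg_mul]
  have hFnn : ∀ x ∈ Set.Ioi (0:ℝ), 0 ≤ F x := by
    intro x hx
    have hx' : (0:ℝ) < x := hx
    have h1 : (0:ℝ) ≤ m * x ^ (-α) := mul_nonneg hm.le (Real.rpow_nonneg hx'.le _)
    exact mul_nonneg (by linarith) (Real.exp_pos _).le
  have hΦnn : ∀ x ∈ Set.Ioi (0:ℝ), 0 ≤ Φ x := fun x _ =>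
    mul_nonneg hm.le (Real.exp_pos _).le
  -- continuity & sign for x^α * D x
  have hHcont : ContinuousOn (fun x : ℝ => x ^ α * D x) (Set.Ioi 0) :=
    (ContinuousOn.rpow_const continuousOn_id fun x hx => Or.inl (ne_of_gt hx)).mul hDcont
  have hHnn : ∀ x ∈ Set.Ioi (0:ℝ), 0 ≤ x ^ α * D x := fun x hx =>
    mul_nonneg (Real.rpow_nonneg (le_of_lt hx) _) (hDpos x hx)
  -- the two FTC facts
  have hcdf : ∀ b, 0 < b →
      IntegrableOn D (Set.Ioc 0 b) ∧ ∫ x in Set.Ioc 0 b, D x = F b := fun b hb =>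
    ftc_Ioc_aux hb hFderiv hDcont hDpos hFnn hFlim
  have hHfact : ∀ b, 0 < b → IntegrableOn (fun x => x ^ α * D x) (Set.Ioc 0 b) ∧
      ∫ x in Set.Ioc 0 b, x ^ α * D x = Φ b := fun b hb =>
    ftc_Ioc_aux hb hΦderiv hHcont hHnn hΦnn hΦlim
  -- cdf as a measure statement
  have hmeasIic : ∀ x, 0 < x → ρ (Set.Iic x) = ENNReal.ofReal (F x) := by
    intro x hx
    rw [hρ, withDensity_apply _ measurableSet_Iic,
      Measure.restrict_restrict measurableSet_Iic]
    have hset : Set.Iic x ∩ Set.Ioi 0 = Set.Ioc 0 x := by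
      ext y
      simp only [Set.mem_inter_iff, Set.mem_Iic, Set.mem_Ioi, Set.mem_Ioc]
      tauto
    rw [hset]
    have hnnae : 0 ≤ᵐ[volume.restrict (Set.Ioc 0 x)] D :=
      (ae_restrict_iff' measurableSet_Ioc).2 (Eventually.of_forall fun y hy => hDpos y hy.1)
    rw [← ofReal_integral_eq_lintegral_ofReal (hcdf x hx).1 hnnae, (hcdf x hx).2]
  -- probability
  have hprob : IsProbabilityMeasure ρ := by
    constructor
    have hall := tendsto_measure_Iic_atTop ρ
    have hF1 : Tendsto F atTop (𝓝 1) := by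
      have h0 : Tendsto (fun x : ℝ => m * x ^ (-α)) atTop (𝓝 (m * 0)) :=
        (tendsto_rpow_neg_atTop hα).const_mul m
      rw [mul_zero] at h0
      have hc : Continuous fun u : ℝ => (1 + u) * Real.exp (-u) :=
        (continuous_const.add continuous_id).mul (Real.continuous_exp.comp continuous_neg)
      have h1 := (hc.tendsto 0).comp h0
      simp only [add_zero, neg_zero, Real.exp_zero, mul_one] at h1
      refine h1.congr fun x => ?_
      simp only [Function.comp, hF, neg_mul]
    have h2 : Tendsto (fun x => ρ (Set.Iic x)) atTop (𝓝 1) := by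
      have h3 : Tendsto (fun x => ENNReal.ofReal (F x)) atTop (𝓝 (ENNReal.ofReal 1)) :=
        (ENNReal.continuous_ofReal.tendsto 1).comp hF1
      rw [ENNReal.ofReal_one] at h3
      refine h3.congr' ?_
      filter_upwards [eventually_gt_atTop (0:ℝ)] with x hx using (hmeasIic x hx).symm
    exact tendsto_nhds_unique hall h2
  -- rewrite ρ-integrals as weighted Lebesgue integrals
  have hfeq : (fun x => ENNReal.ofReal (D x))
      = fun x => (((fun x => (D x).toNNReal) x : ℝ≥0) : ℝ≥0∞) := rfl
  have hNNae : ∀ s : Set ℝ, MeasurableSet s → s ⊆ Set.Ioi 0 →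
      AEMeasurable (fun x => (D x).toNNReal) (volume.restrict s) := fun s hs hsub =>
    ((hDcont.mono hsub).aemeasurable hs).real_toNNReal
  refine ⟨hprob, ?_, ?_, ?_⟩
  · -- cdf
    intro x hx
    rw [hmeasIic x hx, ENNReal.toReal_ofReal (hFnn x hx)]
  · -- Williamson transform
    intro t ht
    rw [hρ, hfeq, integral_withDensity_eq_integral_smul₀
      (hNNae _ measurableSet_Ioi (subset_refl _))]
    have hsub : Set.Ioc 0 t ⊆ Set.Ioi (0:ℝ) := Set.Ioc_subset_Ioi_self
    have hzero : ∀ x ∈ Set.Ioi (0:ℝ) \ Set.Ioc 0 t,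
        (D x).toNNReal • max (1 - (x / t) ^ α) 0 = 0 := by
      rintro x ⟨hx1, hx2⟩
      have hx' : (0:ℝ) < x := hx1
      have htx : t < x := by
        by_contra h
        exact hx2 ⟨hx', not_lt.1 h⟩
      have h1 : (1:ℝ) ≤ x / t := (one_le_div ht).2 htx.le
      have h2 : (1:ℝ) ≤ (x / t) ^ α := by
        calc (1:ℝ) = (1:ℝ) ^ α := (Real.one_rpow α).symm
        _ ≤ (x / t) ^ α := Real.rpow_le_rpow zero_le_one h1 hα.le
      rw [max_eq_right (by linarith), smul_zero]
    rw [show (∫ x, (D x).toNNReal • max (1 - (x / t) ^ α) 0 ∂(volume.restrict (Set.Ioi 0)))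
        = ∫ x in Set.Ioi (0:ℝ), (D x).toNNReal • max (1 - (x / t) ^ α) 0 from rfl,
      setIntegral_eq_of_subset_of_forall_diff_eq_zero measurableSet_Ioi hsub hzero]
    have hkey : ∀ x ∈ Set.Ioc (0:ℝ) t,
        (D x).toNNReal • max (1 - (x / t) ^ α) 0 = D x - t ^ (-α) * (x ^ α * D x) := by
      intro x hx
      have hx0 : (0:ℝ) < x := hx.1
      have hs : (x / t) ^ α ≤ 1 :=
        Real.rpow_le_one (by positivity) ((div_le_one ht).2 hx.2) hα.le
      have hmax : max (1 - (x / t) ^ α) 0 = 1 - (x / t) ^ α := max_eq_left (by linarith)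
      have hdiv : (x / t) ^ α = x ^ α * t ^ (-α) := by
        rw [Real.div_rpow hx0.le ht.le, Real.rpow_neg ht.le, div_eq_mul_inv]
      rw [NNReal.smul_def, smul_eq_mul, Real.coe_toNNReal _ (hDpos x hx0), hmax, hdiv]
      ring
    rw [setIntegral_congr_fun measurableSet_Ioc hkey,
      integral_sub (hcdf t ht).1 ((hHfact t ht).1.const_mul _),
      integral_const_mul, (hcdf t ht).2, (hHfact t ht).2, hF, hΦ]
    simp only
    ring
  · -- truncated α-moment
    intro t ht
    have hres : ρ.restrict (Set.Icc 0 t)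
        = (volume.restrict (Set.Ioc 0 t)).withDensity fun x => ENNReal.ofReal (D x) := by
      have hset2 : Set.Icc (0:ℝ) t ∩ Set.Ioi 0 = Set.Ioc 0 t := by
        ext y
        simp only [Set.mem_inter_iff, Set.mem_Icc, Set.mem_Ioi, Set.mem_Ioc]
        constructor
        · rintro ⟨⟨_, h2⟩, h3⟩; exact ⟨h3, h2⟩
        · rintro ⟨h1, h2⟩; exact ⟨⟨h1.le, h2⟩, h1⟩
      rw [hρ, restrict_withDensity measurableSet_Icc,
        Measure.restrict_restrict measurableSet_Icc, hset2]
    rw [show (∫ x in Set.Icc 0 t, x ^ α ∂ρ) = ∫ x, x ^ α ∂(ρ.restrict (Set.Icc 0 t)) from rfl,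
      hres, hfeq, integral_withDensity_eq_integral_smul₀
      (hNNae _ measurableSet_Ioc Set.Ioc_subset_Ioi_self)]
    have hkey : ∀ x ∈ Set.Ioc (0:ℝ) t, (D x).toNNReal • x ^ α = x ^ α * D x := by
      intro x hx
      rw [NNReal.smul_def, smul_eq_mul, Real.coe_toNNReal _ (hDpos x hx.1)]
      ring
    rw [show (∫ x, (D x).toNNReal • x ^ α ∂(volume.restrict (Set.Ioc 0 t)))
        = ∫ x in Set.Ioc (0:ℝ) t, (D x).toNNReal • x ^ α from rfl,
      setIntegral_congr_fun measurableSet_Ioc hkey, (hHfact t ht).2]
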